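/- arXiv:2306.01867 — 2 statements merged into one kernel-verified Lean document; each statement's English description precedes it below -/
import Mathlib

section
/- Dual feasibility lower-bounds the cost of any tree on at least k vertices: Let V be a finite set, G a simple graph on V, c a nonnegative cost function on the edges of G, and k a natural number. Suppose y assigns a nonnegative real to each nonempty subset S ⊆ V and λ₁, λ₂ ≥ 0 are reals such that: (i) for every edge e of G, the sum of y_S over all S with e ∈ δ(S) is at most c_e; and (ii) for every S ⊆ V, the sum of y_T over nonempty T ⊊ S plus λ₂ is at least λ₁|S|. Then for every subtree T of G whose vertex set S_T satisfies |S_T| ≥ k, we have λ₁·k − λ₂ ≤ ∑_{e ∈ T} c_e. -/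
open scoped Classical

/-- An edge `e` crosses the cut `δ(S)`: it has exactly one endpoint in `S`. -/
def Crosses {V : Type*} (e : Sym2 V) (S : Finset V) : Prop :=
  ∃ u v, e = s(u, v) ∧ u ∈ S ∧ v ∉ S

lemma walk_crossing {V : Type*} [DecidableEq V] {G : SimpleGraph V}
    (T : G.Subgraph) (S : Finset V) :
    ∀ {a b : T.verts} (_ : T.coe.Walk a b), (a : V) ∈ S → (b : V) ∉ S →
      ∃ e ∈ T.edgeSet, Crosses e S := by
  intro a b p
  induction p with
  | nil => intro ha hb; exact absurd ha hb
  | @cons u v w h q ih =>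
    intro ha hb
    by_cases hv : (v : V) ∈ S
    · exact ih hv hb
    · exact ⟨s((u : V), (v : V)),
        SimpleGraph.Subgraph.mem_edgeSet.mpr ((SimpleGraph.Subgraph.coe_adj T u v).mp h),
        (u : V), (v : V), rfl, ha, hv⟩

/-- Dual feasibility lower-bounds the cost of any tree on at least `k` vertices. -/
theorem dual_feasible_lower_bound
    {V : Type*} [Fintype V] [DecidableEq V]
    (G : SimpleGraph V) (c : Sym2 V → ℝ) (k : ℕ)
    (hc : ∀ e ∈ G.edgeSet, 0 ≤ c e)
    (y : Finset V → ℝ) (lam₁ lam₂ : ℝ)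
    (hy : ∀ S : Finset V, S.Nonempty → 0 ≤ y S)
    (hlam₁ : 0 ≤ lam₁) (hlam₂ : 0 ≤ lam₂)
    (hdual1 : ∀ e ∈ G.edgeSet,
      (∑ S ∈ Finset.univ.filter (fun S : Finset V => Crosses e S), y S) ≤ c e)
    (hdual2 : ∀ S : Finset V,
      lam₁ * S.card ≤ (∑ T ∈ Finset.univ.filter (fun T : Finset V => T.Nonempty ∧ T ⊂ S), y T) + lam₂)
    (T : G.Subgraph) (htree : T.coe.IsTree)
    (hk : k ≤ T.verts.toFinset.card) :
    lam₁ * k - lam₂ ≤ ∑ e ∈ T.edgeSet.toFinset, c e := by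
  set A : Finset V := T.verts.toFinset with hAdef
  set E : Finset (Sym2 V) := T.edgeSet.toFinset with hEdef
  -- every nonempty proper subset of A is crossed by a tree edge
  have hcross : ∀ S : Finset V, S.Nonempty → S ⊂ A →
      1 ≤ (E.filter (fun e => Crosses e S)).card := by
    intro S hSne hSA
    obtain ⟨u, hu⟩ := hSne
    obtain ⟨v, hvA, hvS⟩ := Finset.exists_of_ssubset hSA
    have huA : u ∈ A := hSA.subset hu
    have huV : u ∈ T.verts := Set.mem_toFinset.mp huA
    have hvV : v ∈ T.verts := Set.mem_toFinset.mp hvA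
    obtain ⟨p⟩ := (htree.isConnected.preconnected ⟨u, huV⟩ ⟨v, hvV⟩)
    obtain ⟨e, heT, hecross⟩ := walk_crossing T S p hu hvS
    have : e ∈ E.filter (fun e => Crosses e S) :=
      Finset.mem_filter.mpr ⟨Set.mem_toFinset.mpr heT, hecross⟩
    exact Finset.card_pos.mpr ⟨e, this⟩
  -- crossed sets are nonempty
  have hcr_ne : ∀ (e : Sym2 V) (S : Finset V), Crosses e S → S.Nonempty := by
    rintro e S ⟨u, v, -, hu, -⟩; exact ⟨u, hu⟩
  -- double counting
  have hswap : ∑ e ∈ E, ∑ S ∈ Finset.univ.filter (fun S : Finset V => Crosses e S), y S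
      = ∑ S : Finset V, ((E.filter (fun e => Crosses e S)).card : ℝ) * y S := by
    calc ∑ e ∈ E, ∑ S ∈ Finset.univ.filter (fun S : Finset V => Crosses e S), y S
        = ∑ e ∈ E, ∑ S : Finset V, if Crosses e S then y S else 0 := by
          simp [Finset.sum_filter]
      _ = ∑ S : Finset V, ∑ e ∈ E, if Crosses e S then y S else 0 := Finset.sum_comm
      _ = ∑ S : Finset V, ((E.filter (fun e => Crosses e S)).card : ℝ) * y S := by
          refine Finset.sum_congr rfl fun S _ => ?_
          rw [← Finset.sum_filter, Finset.sum_const, nsmul_eq_mul]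
  have key : (∑ S ∈ Finset.univ.filter (fun S : Finset V => S.Nonempty ∧ S ⊂ A), y S)
      ≤ ∑ e ∈ E, ∑ S ∈ Finset.univ.filter (fun S : Finset V => Crosses e S), y S := by
    rw [hswap]
    calc (∑ S ∈ Finset.univ.filter (fun S : Finset V => S.Nonempty ∧ S ⊂ A), y S)
        ≤ ∑ S ∈ Finset.univ.filter (fun S : Finset V => S.Nonempty ∧ S ⊂ A),
            ((E.filter (fun e => Crosses e S)).card : ℝ) * y S := by
          refine Finset.sum_le_sum fun S hS => ?_
          obtain ⟨hSne, hSA⟩ := (Finset.mem_filter.mp hS).2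
          have h1 : (1 : ℝ) ≤ ((E.filter (fun e => Crosses e S)).card : ℝ) := by
            exact_mod_cast hcross S hSne hSA
          nlinarith [hy S hSne]
      _ ≤ ∑ S : Finset V, ((E.filter (fun e => Crosses e S)).card : ℝ) * y S := by
          refine Finset.sum_le_sum_of_subset_of_nonneg (Finset.filter_subset _ _)
            fun S _ _ => ?_
          rcases Nat.eq_zero_or_pos (E.filter (fun e => Crosses e S)).card with h0 | hpos
          · simp [h0]
          · obtain ⟨e, he⟩ := Finset.card_pos.mp hpos
            have hSne := hcr_ne e S (Finset.mem_filter.mp he).2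
            have := hy S hSne
            positivity
  have last : ∑ e ∈ E, ∑ S ∈ Finset.univ.filter (fun S : Finset V => Crosses e S), y S
      ≤ ∑ e ∈ E, c e :=
    Finset.sum_le_sum fun e he =>
      hdual1 e (T.edgeSet_subset (Set.mem_toFinset.mp he))
  have step1 : lam₁ * (k : ℝ) ≤ lam₁ * (A.card : ℝ) :=
    mul_le_mul_of_nonneg_left (by exact_mod_cast hk) hlam₁
  have step2 := hdual2 A
  linarith
end

section
/- Upper bound on the picked tree (Theorem 2 of the paper): Let V be a finite set, G a simple graph on V, c a nonnegative cost function on the edges of G, λ₁ ≥ 0, and y an assignment of a nonnegative real to each nonempty subset of V. Let T₀ be a subtree of G with vertex set S₀, |S₀| = k, and distinguished vertex v ∈ S₀, and let S₂ ⊆ V with S₀ ⊆ S₂. Assume: (i) every edge e ∈ T₀ is tight, i.e. ∑_{S : e ∈ δ(S)} y_S = c_e; (ii) ∑_{e ∈ T₀} ∑_{S : e ∈ δ(S)} y_S ≤ 2·∑_{U : U ∩ S₀ ≠ ∅, v ∉ U} y_U; (iii) S₂ \ S₀ is the disjoint union of pairwise disjoint neutral sets N′₁, …, N′_m, each disjoint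 from S₀, together with N_p \ S₀ for a neutral set N_p ⊊ S₂ with N_p disjoint from each N′_i; (iv) ∑_{nonempty U ⊆ N_p ∩ S₀} y_U ≤ λ₁|N_p ∩ S₀|; (v) y_U = 0 for every nonempty U ⊆ N_p with U ∩ S₀ ≠ ∅, U ∩ (N_p \ S₀) ≠ ∅, and v ∉ U; and (vi) y_U = 0 for every nonempty U with U ∩ S₀ ≠ ∅, v ∉ U, and U ⊄ S₂. Then ∑_{e ∈ T₀} c_e ≤ 2(λ₁·k − π(S₂)), where π(S₂) = λ₁|S₂| − ∑_{nonempty U ⊊ S₂} y_U. -/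
open scoped Classical

/-- Upper bound on the picked tree (Theorem 2 of the paper):
`∑_{e ∈ T₀} c_e ≤ 2(λ₁·k − π(S₂))` where `π(S₂) = λ₁|S₂| − ∑_{∅ ≠ U ⊊ S₂} y_U`. -/
theorem picked_tree_upper_bound
    {V : Type*} [Fintype V] [DecidableEq V]
    (G : SimpleGraph V) (c : Sym2 V → ℝ) (k m : ℕ)
    (hc : ∀ e ∈ G.edgeSet, 0 ≤ c e)
    (lam₁ : ℝ) (hlam₁ : 0 ≤ lam₁)
    (y : Finset V → ℝ)
    (hy : ∀ U : Finset V, U.Nonempty → 0 ≤ y U)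
    (T₀ : G.Subgraph) (htree : T₀.coe.IsTree)
    (S₀ S₂ : Finset V) (v : V)
    (hverts : T₀.verts = ↑S₀) (hcard : S₀.card = k)
    (hv : v ∈ S₀) (hsub : S₀ ⊆ S₂)
    -- (i) every edge of T₀ is tight
    (htight : ∀ e ∈ T₀.edgeSet,
      (∑ S ∈ Finset.univ.filter (fun S : Finset V => Crosses e S), y S) = c e)
    -- (ii) bound on the total dual load of the tree
    (hload : (∑ e ∈ T₀.edgeSet.toFinset,
        ∑ S ∈ Finset.univ.filter (fun S : Finset V => Crosses e S), y S) ≤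
      2 * ∑ U ∈ Finset.univ.filter
        (fun U : Finset V => (U ∩ S₀).Nonempty ∧ v ∉ U), y U)
    -- (iii) decomposition of S₂ \ S₀ into neutral sets N′₁, …, N′_m and N_p \ S₀
    (N' : Fin m → Finset V) (Np : Finset V)
    (hN'disj : ∀ i j, i ≠ j → Disjoint (N' i) (N' j))
    (hN'neutral : ∀ i,
      (∑ U ∈ Finset.univ.filter (fun U : Finset V => U.Nonempty ∧ U ⊆ N' i), y U) =
        lam₁ * (N' i).card)
    (hN'S₀ : ∀ i, Disjoint (N' i) S₀)
    (hNpneutral :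
      (∑ U ∈ Finset.univ.filter (fun U : Finset V => U.Nonempty ∧ U ⊆ Np), y U) =
        lam₁ * Np.card)
    (hNpS₂ : Np ⊂ S₂)
    (hNpN' : ∀ i, Disjoint Np (N' i))
    (hdecomp : S₂ \ S₀ = (Finset.univ.biUnion fun i => N' i) ∪ (Np \ S₀))
    -- (iv)
    (hNpS₀ :
      (∑ U ∈ Finset.univ.filter (fun U : Finset V => U.Nonempty ∧ U ⊆ Np ∩ S₀), y U) ≤
        lam₁ * (Np ∩ S₀).card)
    -- (v)
    (hv5 : ∀ U : Finset V, U.Nonempty → U ⊆ Np → (U ∩ S₀).Nonempty →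
      (U ∩ (Np \ S₀)).Nonempty → v ∉ U → y U = 0)
    -- (vi)
    (hv6 : ∀ U : Finset V, U.Nonempty → (U ∩ S₀).Nonempty → v ∉ U → ¬ U ⊆ S₂ → y U = 0) :
    (∑ e ∈ T₀.edgeSet.toFinset, c e) ≤
      2 * (lam₁ * k -
        (lam₁ * S₂.card -
          ∑ U ∈ Finset.univ.filter (fun U : Finset V => U.Nonempty ∧ U ⊂ S₂), y U)) := by
  classical
  set F' : Finset (Finset V) :=
    Finset.univ.filter (fun U : Finset V => (U ∩ S₀).Nonempty ∧ v ∉ U) with hF'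
  set P : Finset (Finset V) :=
    Finset.univ.filter (fun U : Finset V => U.Nonempty ∧ U ⊂ S₂) with hP
  set A : ℝ := ∑ U ∈ F', y U with hA
  set B : ℝ := ∑ U ∈ P, y U with hB
  -- Step 1: cost of tree ≤ 2A
  have step1 : (∑ e ∈ T₀.edgeSet.toFinset, c e) ≤ 2 * A := by
    have h1 : (∑ e ∈ T₀.edgeSet.toFinset, c e)
        = ∑ e ∈ T₀.edgeSet.toFinset,
            ∑ S ∈ Finset.univ.filter (fun S : Finset V => Crosses e S), y S := by
      refine Finset.sum_congr rfl (fun e he => ?_)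
      exact (htight e (Set.mem_toFinset.mp he)).symm
    rw [h1]; exact hload
  -- notation: q is the "bad" predicate
  set q : Finset V → Prop := fun U => (U ∩ S₀).Nonempty ∧ v ∉ U with hq
  -- Step 2: A = sum over P.filter q
  have hAeq : A = ∑ U ∈ P.filter q, y U := by
    rw [hA]
    refine (Finset.sum_subset ?_ ?_).symm
    · intro U hU
      simp only [hP, hq, Finset.mem_filter, Finset.mem_univ, true_and] at hU
      simp only [hF', Finset.mem_filter, Finset.mem_univ, true_and]
      exact hU.2
    · intro U hU hU'
      simp only [hF', Finset.mem_filter, Finset.mem_univ, true_and] at hU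
      simp only [hP, hq, Finset.mem_filter, Finset.mem_univ, true_and] at hU'
      obtain ⟨x, hx⟩ := hU.1
      have hUne : U.Nonempty := ⟨x, (Finset.mem_inter.mp hx).1⟩
      have hns : ¬ U ⊂ S₂ := by
        intro h; exact hU' ⟨⟨hUne, h⟩, hU⟩
      have hnsub : ¬ U ⊆ S₂ := by
        intro h
        rcases Finset.ssubset_iff_subset_ne.not.mp hns with h'
        have : U = S₂ := by
          by_contra hne
          exact h' ⟨h, hne⟩
        exact hU.2 (this ▸ hsub hv)
      exact hv6 U hUne hU.1 hU.2 hnsub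
  -- Step 2': B - A = sum over good part of P
  have hsplit : ∑ U ∈ P.filter q, y U + ∑ U ∈ P.filter (fun U => ¬ q U), y U = B := by
    rw [hB]; exact Finset.sum_filter_add_sum_filter_not P q y
  -- the subfamilies
  set Ai : Fin m → Finset (Finset V) := fun i =>
    Finset.univ.filter (fun U : Finset V => U.Nonempty ∧ U ⊆ N' i) with hAi
  set ANp : Finset (Finset V) :=
    Finset.univ.filter (fun U : Finset V => U.Nonempty ∧ U ⊆ Np) with hANp
  set As : Finset (Finset V) :=
    Finset.univ.filter (fun U : Finset V => U.Nonempty ∧ U ⊆ Np ∩ S₀) with hAs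
  have hAsANp : As ⊆ ANp := by
    intro U hU
    simp only [hAs, Finset.mem_filter, Finset.mem_univ, true_and] at hU
    simp only [hANp, Finset.mem_filter, Finset.mem_univ, true_and]
    exact ⟨hU.1, hU.2.trans Finset.inter_subset_left⟩
  -- bound on λ₁ |Np \ S₀|
  have hNpbound : lam₁ * ((Np \ S₀).card : ℝ) ≤ ∑ U ∈ ANp \ As, y U := by
    have hint : Np ∩ S₀ ⊆ Np := Finset.inter_subset_left
    have hsd : Np \ S₀ = Np \ (Np ∩ S₀) := by
      ext x; simp [Finset.mem_sdiff, Finset.mem_inter]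
    have hcard' : ((Np \ S₀).card : ℝ) = (Np.card : ℝ) - ((Np ∩ S₀).card : ℝ) := by
      rw [hsd, Finset.card_sdiff_of_subset hint, Nat.cast_sub (Finset.card_le_card hint)]
    have hsum : ∑ U ∈ ANp \ As, y U = (∑ U ∈ ANp, y U) - ∑ U ∈ As, y U :=
      Finset.sum_sdiff_eq_sub hAsANp
    rw [hcard', hsum, mul_sub]
    have h1 : ∑ U ∈ ANp, y U = lam₁ * (Np.card : ℝ) := hNpneutral
    have h2 : ∑ U ∈ As, y U ≤ lam₁ * ((Np ∩ S₀).card : ℝ) := hNpS₀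
    linarith
  -- kill the bad part of ANp \ As using (v)
  set Ap : Finset (Finset V) := (ANp \ As).filter (fun U => ¬ q U) with hAp
  have hApsum : ∑ U ∈ ANp \ As, y U = ∑ U ∈ Ap, y U := by
    refine (Finset.sum_subset (Finset.filter_subset _ _) ?_).symm
    intro U hU hU'
    have hqU : q U := by
      by_contra hq'
      exact hU' (Finset.mem_filter.mpr ⟨hU, hq'⟩)
    rw [Finset.mem_sdiff] at hU
    obtain ⟨hU1, hU2⟩ := hU
    simp only [hANp, Finset.mem_filter, Finset.mem_univ, true_and] at hU1
    have hnotsub : ¬ U ⊆ Np ∩ S₀ := by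
      intro h
      refine hU2 ?_
      simp only [hAs, Finset.mem_filter, Finset.mem_univ, true_and]
      exact ⟨hU1.1, h⟩
    obtain ⟨x, hxU, hx⟩ := Finset.not_subset.mp hnotsub
    have hxNp : x ∈ Np := hU1.2 hxU
    have hxS₀ : x ∉ S₀ := fun h => hx (Finset.mem_inter.mpr ⟨hxNp, h⟩)
    exact hv5 U hU1.1 hU1.2 hqU.1
      ⟨x, Finset.mem_inter.mpr ⟨hxU, Finset.mem_sdiff.mpr ⟨hxNp, hxS₀⟩⟩⟩ hqU.2
  -- the good part of P
  set Gd : Finset (Finset V) := P.filter (fun U => ¬ q U) with hGd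
  -- subfamilies are pairwise disjoint
  have hAidisj : (↑(Finset.univ : Finset (Fin m)) : Set (Fin m)).PairwiseDisjoint Ai := by
    intro i _ j _ hij
    refine Finset.disjoint_left.mpr (fun U hUi hUj => ?_)
    simp only [hAi, Finset.mem_filter, Finset.mem_univ, true_and] at hUi hUj
    obtain ⟨x, hx⟩ := hUi.1
    exact Finset.disjoint_left.mp (hN'disj i j hij) (hUi.2 hx) (hUj.2 hx)
  have hAiAp : Disjoint (Finset.univ.biUnion Ai) Ap := by
    rw [Finset.disjoint_biUnion_left]
    intro i _
    refine Finset.disjoint_left.mpr (fun U hUi hUp => ?_)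
    simp only [hAi, Finset.mem_filter, Finset.mem_univ, true_and] at hUi
    simp only [hAp, Finset.mem_filter, Finset.mem_sdiff] at hUp
    have : U ∈ ANp := hUp.1.1
    simp only [hANp, Finset.mem_filter, Finset.mem_univ, true_and] at this
    obtain ⟨x, hx⟩ := hUi.1
    exact Finset.disjoint_left.mp (hNpN' i) (this.2 hx) (hUi.2 hx)
  -- N' i ⊆ S₂ \ S₀
  have hN'sub : ∀ i, N' i ⊆ S₂ \ S₀ := by
    intro i x hx
    rw [hdecomp]
    exact Finset.mem_union_left _ (Finset.mem_biUnion.mpr ⟨i, Finset.mem_univ i, hx⟩)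
  -- the union of subfamilies sits inside Gd
  have hsubGd : (Finset.univ.biUnion Ai) ∪ Ap ⊆ Gd := by
    intro U hU
    rcases Finset.mem_union.mp hU with hU | hU
    · obtain ⟨i, _, hUi⟩ := Finset.mem_biUnion.mp hU
      simp only [hAi, Finset.mem_filter, Finset.mem_univ, true_and] at hUi
      have hUS₂ : U ⊆ S₂ := fun x hx =>
        (Finset.mem_sdiff.mp (hN'sub i (hUi.2 hx))).1
      have hvU : v ∉ U := fun h =>
        (Finset.mem_sdiff.mp (hN'sub i (hUi.2 h))).2 hv
      have hUssub : U ⊂ S₂ := Finset.ssubset_iff_subset_ne.mpr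
        ⟨hUS₂, fun h => hvU (h ▸ hsub hv)⟩
      have hUq : ¬ q U := by
        rintro ⟨⟨x, hx⟩, -⟩
        rw [Finset.mem_inter] at hx
        exact Finset.disjoint_left.mp (hN'S₀ i) (hUi.2 hx.1) hx.2
      simp only [hGd, hP, Finset.mem_filter, Finset.mem_univ, true_and]
      exact ⟨⟨hUi.1, hUssub⟩, hUq⟩
    · simp only [hAp, Finset.mem_filter, Finset.mem_sdiff] at hU
      have hU1 := hU.1.1
      simp only [hANp, Finset.mem_filter, Finset.mem_univ, true_and] at hU1
      simp only [hGd, hP, Finset.mem_filter, Finset.mem_univ, true_and]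
      exact ⟨⟨hU1.1, lt_of_le_of_lt (Finset.le_iff_subset.mpr hU1.2) hNpS₂⟩, hU.2⟩
  -- sum over the union
  have hunionsum : ∑ U ∈ (Finset.univ.biUnion Ai) ∪ Ap, y U
      = (∑ i : Fin m, ∑ U ∈ Ai i, y U) + ∑ U ∈ Ap, y U := by
    rw [Finset.sum_union hAiAp, Finset.sum_biUnion hAidisj]
  -- nonnegativity on Gd
  have hGdnonneg : ∀ U ∈ Gd, 0 ≤ y U := by
    intro U hU
    simp only [hGd, hP, Finset.mem_filter, Finset.mem_univ, true_and] at hU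
    exact hy U hU.1.1
  have hsumle : ∑ U ∈ (Finset.univ.biUnion Ai) ∪ Ap, y U ≤ ∑ U ∈ Gd, y U :=
    Finset.sum_le_sum_of_subset_of_nonneg hsubGd (fun U hU _ => hGdnonneg U hU)
  -- cardinality of S₂ \ S₀
  have hbUdisj : Disjoint (Finset.univ.biUnion fun i => N' i) (Np \ S₀) := by
    rw [Finset.disjoint_biUnion_left]
    intro i _
    exact Finset.disjoint_of_subset_right Finset.sdiff_subset (hNpN' i).symm
  have hcardS : ((S₂ \ S₀).card : ℝ)
      = (∑ i : Fin m, ((N' i).card : ℝ)) + ((Np \ S₀).card : ℝ) := by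
    rw [hdecomp, Finset.card_union_of_disjoint hbUdisj,
      Finset.card_biUnion (fun i _ j _ hij => hN'disj i j hij)]
    push_cast
    ring
  -- the key inequality: λ₁ |S₂ \ S₀| ≤ ∑_{Gd} y
  have hkey : lam₁ * ((S₂ \ S₀).card : ℝ) ≤ ∑ U ∈ Gd, y U := by
    have h1 : lam₁ * ((S₂ \ S₀).card : ℝ)
        = (∑ i : Fin m, ∑ U ∈ Ai i, y U) + lam₁ * ((Np \ S₀).card : ℝ) := by
      rw [hcardS, mul_add, Finset.mul_sum]
      congr 1
      exact Finset.sum_congr rfl (fun i _ => (hN'neutral i).symm)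
    rw [h1]
    calc (∑ i : Fin m, ∑ U ∈ Ai i, y U) + lam₁ * ((Np \ S₀).card : ℝ)
        ≤ (∑ i : Fin m, ∑ U ∈ Ai i, y U) + ∑ U ∈ Ap, y U := by
          have := hNpbound
          rw [hApsum] at this
          linarith
      _ = ∑ U ∈ (Finset.univ.biUnion Ai) ∪ Ap, y U := hunionsum.symm
      _ ≤ ∑ U ∈ Gd, y U := hsumle
  -- conclude
  have hcards : ((S₂ \ S₀).card : ℝ) = (S₂.card : ℝ) - (k : ℝ) := by
    rw [Finset.card_sdiff_of_subset hsub, Nat.cast_sub (Finset.card_le_card hsub), hcard]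
  have hGdval : ∑ U ∈ Gd, y U = B - A := by
    rw [hAeq]
    have := hsplit
    linarith
  rw [hcards, hGdval] at hkey
  have hAle : A ≤ lam₁ * (k : ℝ) - (lam₁ * (S₂.card : ℝ) - B) := by nlinarith
  calc (∑ e ∈ T₀.edgeSet.toFinset, c e) ≤ 2 * A := step1
    _ ≤ 2 * (lam₁ * k - (lam₁ * S₂.card - B)) := by linarith
    _ = _ := by rw [hB, hP]
end
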